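/- Let T be a continuous linear operator on a separable Fréchet space X. The following assertions are equivalent: (1) T is hypercyclic and every hypercyclic vector of T is an AP_b-hypercyclic vector; (2) T has an AP_b-hypercyclic vector; (3) T is hypercyclic and for every nonempty open set U ⊆ X there is k ≥ 1 such that for every m ∈ ℕ the intersection ⋂_{j=1}^{m} T^{-jk}(U) is nonempty; (4) for all nonempty open sets U, V ⊆ X there is k ≥ 1 such that for every m ∈ ℕ there exist k_m ∈ ℕ and x ∈ U with T^{k_m + jk}(x) ∈ V for every 0 ≤ j ≤ m; (5) the set of AP_b-hypercyclic vectors of T is residual (comeagre) in X. -/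

import Mathlib

/-- A set `A ⊆ ℕ` belongs to the family `AP_b` if it contains arbitrarily long
arithmetic progressions with some fixed common difference `k ≥ 1`. -/
def APb (A : Set ℕ) : Prop :=
  ∃ k : ℕ, 1 ≤ k ∧ ∀ m : ℕ, ∃ a : ℕ, ∀ j : ℕ, j ≤ m → a + j * k ∈ A

namespace APbAux

open Set Filter Topology TopologicalSpace

lemma apb_mono {A B : Set ℕ} (h : A ⊆ B) (hA : APb A) : APb B := by
  obtain ⟨k, hk1, hk⟩ := hA
  exact ⟨k, hk1, fun m => (hk m).imp fun a ha j hj => h (ha j hj)⟩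

variable {X : Type*} [AddCommGroup X] [Module ℝ X] [TopologicalSpace X] (T : X →L[ℝ] X)

lemma pow_apply_add (a b : ℕ) (x : X) : (T ^ (a + b)) x = (T ^ a) ((T ^ b) x) := by
  rw [pow_add, ContinuousLinearMap.mul_apply]

/-- The set `C_{k,m,U}` is open. -/
lemma isOpen_C {U : Set X} (hU : IsOpen U) (k m : ℕ) :
    IsOpen {z : X | ∀ j ≤ m, (T ^ (j * k)) z ∈ U} := by
  have h : {z : X | ∀ j ≤ m, (T ^ (j * k)) z ∈ U}
      = ⋂ j ∈ Finset.range (m + 1), (T ^ (j * k)) ⁻¹' U := by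
    ext z
    simp [Nat.lt_succ_iff]
  rw [h]
  exact isOpen_biInter_finset fun j _ => hU.preimage (T ^ (j * k)).continuous

lemma dense_orbit_of_apb {x : X}
    (hx : ∀ U : Set X, IsOpen U → U.Nonempty → APb {n : ℕ | (T ^ n) x ∈ U}) :
    Dense (Set.range fun n : ℕ => (T ^ n) x) := by
  rw [dense_iff_inter_open]
  intro U hU hUne
  obtain ⟨k, hk1, hk⟩ := hx U hU hUne
  obtain ⟨a, ha⟩ := hk 0
  have h0 := ha 0 (le_refl 0)
  exact ⟨(T ^ a) x, by simpa using h0, ⟨a, rfl⟩⟩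

lemma two_to_four {x : X}
    (hx : ∀ U : Set X, IsOpen U → U.Nonempty → APb {n : ℕ | (T ^ n) x ∈ U}) :
    ∀ U V : Set X, IsOpen U → U.Nonempty → IsOpen V → V.Nonempty →
      ∃ k : ℕ, 1 ≤ k ∧ ∀ m : ℕ, ∃ km : ℕ, ∃ y ∈ U,
        ∀ j : ℕ, j ≤ m → (T ^ (km + j * k)) y ∈ V := by
  intro U V hU hUne hV hVne
  obtain ⟨_, ⟨n, rfl⟩, hnU⟩ := (dense_orbit_of_apb T hx).exists_mem_open hU hUne
  obtain ⟨k, hk1, hk⟩ := hx V hV hVne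
  refine ⟨k, hk1, fun m => ?_⟩
  obtain ⟨a, ha⟩ := hk (m + n)
  have hnk : n ≤ n * k := Nat.le_mul_of_pos_right n hk1
  refine ⟨a + n * k - n, (T ^ n) x, hnU, fun j hj => ?_⟩
  have key : (T ^ (a + (n * k + j * k))) x ∈ V := by
    have h := ha (n + j) (by omega)
    rwa [add_mul] at h
  rw [← pow_apply_add]
  have he : a + n * k - n + j * k + n = a + (n * k + j * k) := by omega
  rwa [he]

lemma cstar
    (h4 : ∀ U V : Set X, IsOpen U → U.Nonempty → IsOpen V → V.Nonempty →
      ∃ k : ℕ, 1 ≤ k ∧ ∀ m : ℕ, ∃ km : ℕ, ∃ y ∈ U,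
        ∀ j : ℕ, j ≤ m → (T ^ (km + j * k)) y ∈ V)
    {U : Set X} (hU : IsOpen U) (hUne : U.Nonempty) :
    ∃ k : ℕ, 1 ≤ k ∧ ∀ m : ℕ, ∃ z : X, ∀ j ≤ m, (T ^ (j * k)) z ∈ U := by
  obtain ⟨k, hk1, hk⟩ := h4 Set.univ U isOpen_univ ⟨0, trivial⟩ hU hUne
  refine ⟨k, hk1, fun m => ?_⟩
  obtain ⟨km, y, -, hy⟩ := hk m
  refine ⟨(T ^ km) y, fun j hj => ?_⟩
  rw [← pow_apply_add]
  have h := hy j hj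
  rwa [add_comm km (j * k)] at h

lemma apb_of_dense_orbit
    (h4 : ∀ U V : Set X, IsOpen U → U.Nonempty → IsOpen V → V.Nonempty →
      ∃ k : ℕ, 1 ≤ k ∧ ∀ m : ℕ, ∃ km : ℕ, ∃ y ∈ U,
        ∀ j : ℕ, j ≤ m → (T ^ (km + j * k)) y ∈ V)
    {x : X} (hx : Dense (Set.range fun n : ℕ => (T ^ n) x))
    {U : Set X} (hU : IsOpen U) (hUne : U.Nonempty) : APb {n : ℕ | (T ^ n) x ∈ U} := by
  obtain ⟨k, hk1, hC⟩ := cstar T h4 hU hUne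
  refine ⟨k, hk1, fun m => ?_⟩
  obtain ⟨z, hz⟩ := hC m
  obtain ⟨_, ⟨a, rfl⟩, haC⟩ := hx.exists_mem_open (isOpen_C T hU k m) ⟨z, hz⟩
  refine ⟨a, fun j hj => ?_⟩
  show (T ^ (a + j * k)) x ∈ U
  rw [add_comm a (j * k), pow_apply_add]
  exact haC j hj

lemma two_to_three_aux {x : X}
    (hx : ∀ U : Set X, IsOpen U → U.Nonempty → APb {n : ℕ | (T ^ n) x ∈ U})
    {U : Set X} (hU : IsOpen U) (hUne : U.Nonempty) :
    ∃ k : ℕ, 1 ≤ k ∧ ∀ m : ℕ,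
      (⋂ j ∈ Finset.Icc 1 m, (fun y : X => (T ^ (j * k)) y) ⁻¹' U).Nonempty := by
  obtain ⟨k, hk1, hk⟩ := hx U hU hUne
  refine ⟨k, hk1, fun m => ?_⟩
  obtain ⟨a, ha⟩ := hk m
  refine ⟨(T ^ a) x, Set.mem_iInter₂.2 fun j hj => ?_⟩
  have h : (T ^ (a + j * k)) x ∈ U := ha j (Finset.mem_Icc.1 hj).2
  show (T ^ (j * k)) ((T ^ a) x) ∈ U
  rwa [add_comm a (j * k), pow_apply_add] at h


lemma four_to_five {X : Type*} [AddCommGroup X] [Module ℝ X] [UniformSpace X]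
    [IsUniformAddGroup X] [ContinuousSMul ℝ X]
    [Filter.IsCountablyGenerated (uniformity X)] [TopologicalSpace.SeparableSpace X]
    (T : X →L[ℝ] X)
    (h4 : ∀ U V : Set X, IsOpen U → U.Nonempty → IsOpen V → V.Nonempty →
      ∃ k : ℕ, 1 ≤ k ∧ ∀ m : ℕ, ∃ km : ℕ, ∃ y ∈ U,
        ∀ j : ℕ, j ≤ m → (T ^ (km + j * k)) y ∈ V) :
    {x : X | ∀ U : Set X, IsOpen U → U.Nonempty → APb {n : ℕ | (T ^ n) x ∈ U}}
      ∈ residual X := by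
  haveI : SecondCountableTopology X := UniformSpace.secondCountable_of_separable X
  set B := countableBasis X with hB
  haveI : Countable {b : Set X // b ∈ B ∧ b.Nonempty} := by
    have hc : ({b | b ∈ B ∧ b.Nonempty} : Set (Set X)).Countable :=
      (countable_countableBasis X).mono (fun b hb => hb.1)
    exact hc.to_subtype
  have hmem : ∀ b : {b : Set X // b ∈ B ∧ b.Nonempty},
      ∃ k, 1 ≤ k ∧ ∀ m, ∃ z, ∀ j ≤ m, (T ^ (j * k)) z ∈ (b : Set X) :=
    fun b => cstar T h4 (isOpen_of_mem_countableBasis b.2.1) b.2.2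
  choose K hK1 hKz using hmem
  -- the open dense sets
  set F : {b : Set X // b ∈ B ∧ b.Nonempty} → ℕ → Set X := fun b m =>
    ⋃ a : ℕ, (T ^ a) ⁻¹' {z : X | ∀ j ≤ m, (T ^ (j * K b)) z ∈ (b : Set X)} with hF
  have hFopen : ∀ b m, IsOpen (F b m) := fun b m =>
    isOpen_iUnion fun a =>
      (isOpen_C T (isOpen_of_mem_countableBasis b.2.1) (K b) m).preimage (T ^ a).continuous
  have hFdense : ∀ b m, Dense (F b m) := by
    intro b m
    rw [dense_iff_inter_open]
    intro W hW hWne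
    obtain ⟨z, hz⟩ := hKz b m
    obtain ⟨k', hk'1, h'⟩ := h4 W {z : X | ∀ j ≤ m, (T ^ (j * K b)) z ∈ (b : Set X)} hW hWne
      (isOpen_C T (isOpen_of_mem_countableBasis b.2.1) (K b) m) ⟨z, hz⟩
    obtain ⟨km, w, hwW, hw⟩ := h' 0
    have hw0 : (T ^ km) w ∈ {z : X | ∀ j ≤ m, (T ^ (j * K b)) z ∈ (b : Set X)} := by
      have h := hw 0 (le_refl 0)
      simpa using h
    exact ⟨w, hwW, Set.mem_iUnion.2 ⟨km, hw0⟩⟩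
  have hsub : (⋂ b : {b : Set X // b ∈ B ∧ b.Nonempty}, ⋂ m : ℕ, F b m)
      ⊆ {x : X | ∀ U : Set X, IsOpen U → U.Nonempty → APb {n : ℕ | (T ^ n) x ∈ U}} := by
    intro x hx U hU hUne
    obtain ⟨y, hy⟩ := hUne
    obtain ⟨b, hbB, hyb, hbU⟩ := (isBasis_countableBasis X).exists_subset_of_mem_open hy hU
    set b' : {b : Set X // b ∈ B ∧ b.Nonempty} := ⟨b, hbB, ⟨y, hyb⟩⟩ with hb'
    refine apb_mono (fun n hn => hbU hn) ⟨K b', hK1 b', fun m => ?_⟩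
    have hxm : x ∈ F b' m := Set.mem_iInter.1 (Set.mem_iInter.1 hx b') m
    obtain ⟨a, ha⟩ := Set.mem_iUnion.1 hxm
    refine ⟨a, fun j hj => ?_⟩
    show (T ^ (a + j * K b')) x ∈ (b' : Set X)
    rw [add_comm a (j * K b'), pow_apply_add]
    exact ha j hj
  refine Filter.mem_of_superset ?_ hsub
  rw [countable_iInter_mem]
  intro b
  rw [countable_iInter_mem]
  intro m
  exact residual_of_dense_open (hFopen b m) (hFdense b m)

lemma three_to_four {X : Type*} [AddCommGroup X] [Module ℝ X] [UniformSpace X]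
    [IsUniformAddGroup X] [ContinuousSMul ℝ X] [T2Space X]
    (T : X →L[ℝ] X)
    (h3a : ∃ x : X, Dense (Set.range fun n : ℕ => (T ^ n) x))
    (h3b : ∀ U : Set X, IsOpen U → U.Nonempty → ∃ k : ℕ, 1 ≤ k ∧ ∀ m : ℕ,
      (⋂ j ∈ Finset.Icc 1 m, (fun y : X => (T ^ (j * k)) y) ⁻¹' U).Nonempty) :
    ∀ U V : Set X, IsOpen U → U.Nonempty → IsOpen V → V.Nonempty →
      ∃ k : ℕ, 1 ≤ k ∧ ∀ m : ℕ, ∃ km : ℕ, ∃ y ∈ U,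
        ∀ j : ℕ, j ≤ m → (T ^ (km + j * k)) y ∈ V := by
  rcases subsingleton_or_nontrivial X with hs | hnt
  · intro U V hU hUne hV hVne
    obtain ⟨u, hu⟩ := hUne
    obtain ⟨v, hv⟩ := hVne
    refine ⟨1, le_refl 1, fun m => ⟨0, u, hu, fun j hj => ?_⟩⟩
    rwa [Subsingleton.elim ((T ^ (0 + j * 1)) u) v]
  · intro U V hU hUne hV hVne
    obtain ⟨h, hh⟩ := h3a
    obtain ⟨k, hk1, hk⟩ := h3b V hV hVne
    obtain ⟨_, ⟨n, rfl⟩, hnU⟩ := hh.exists_mem_open hU hUne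
    -- the tail of the orbit of `h` is still dense
    classical
    have hxdense : Dense (Set.range fun i : ℕ => (T ^ i) ((T ^ n) h)) := by
      have hd : Dense ((Set.range fun i : ℕ => (T ^ i) h)
          \ ((Finset.range n).image fun j => (T ^ j) h)) :=
        hh.diff_finset _
      refine hd.mono ?_
      rintro _ ⟨⟨i, rfl⟩, hnot⟩
      have hni : n ≤ i := by
        by_contra hlt
        push_neg at hlt
        exact hnot (by
          simp only [Finset.coe_image, Set.mem_image, Finset.mem_coe, Finset.mem_range]
          exact ⟨i, hlt, rfl⟩)
      refine ⟨i - n, ?_⟩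
      show (T ^ (i - n)) ((T ^ n) h) = (T ^ i) h
      rw [← pow_apply_add, Nat.sub_add_cancel hni]
    refine ⟨k, hk1, fun m => ?_⟩
    -- the set C is open and nonempty
    obtain ⟨w, hw⟩ := hk (m + 1)
    have hCne : ∃ z : X, ∀ j ≤ m, (T ^ (j * k)) z ∈ V := by
      refine ⟨(T ^ k) w, fun j hj => ?_⟩
      have h1 : (T ^ ((j + 1) * k)) w ∈ V := by
        have := Set.mem_iInter₂.1 hw (j + 1) (Finset.mem_Icc.2 ⟨by omega, by omega⟩)
        exact this
      rw [← pow_apply_add]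
      rwa [add_one_mul] at h1
    obtain ⟨_, ⟨a, rfl⟩, haC⟩ := hxdense.exists_mem_open (isOpen_C T hV k m) hCne
    refine ⟨a, (T ^ n) h, hnU, fun j hj => ?_⟩
    rw [add_comm a (j * k), pow_apply_add]
    exact haC j hj

end APbAux

open APbAux in
/-- For a continuous linear operator `T` on a separable Fréchet
space `X`, the following are equivalent: (1) `T` is hypercyclic and every
hypercyclic vector is an `AP_b`-hypercyclic vector; (2) there is an
`AP_b`-hypercyclic vector; (3) `T` is hypercyclic and for every nonempty open
`U` there is `k ≥ 1` with `⋂_{j=1}^m T^{-jk}(U) ≠ ∅` for every `m`; (4) for all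
nonempty open `U, V` there is `k ≥ 1` such that for every `m` there are `k_m`
and `x ∈ U` with `T^{k_m + jk}(x) ∈ V` for all `0 ≤ j ≤ m`; (5) the set of
`AP_b`-hypercyclic vectors is residual. -/
theorem APb_hypercyclic_tfae
    {X : Type*} [AddCommGroup X] [Module ℝ X] [UniformSpace X] [IsUniformAddGroup X]
    [ContinuousSMul ℝ X] [LocallyConvexSpace ℝ X] [CompleteSpace X]
    [Filter.IsCountablyGenerated (uniformity X)] [T2Space X]
    [TopologicalSpace.SeparableSpace X]
    (T : X →L[ℝ] X) :
    List.TFAE [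
      -- (1) T is hypercyclic and every hypercyclic vector is AP_b-hypercyclic
      (∃ x : X, Dense (Set.range fun n : ℕ => (T ^ n) x)) ∧
        (∀ x : X, Dense (Set.range fun n : ℕ => (T ^ n) x) →
          ∀ U : Set X, IsOpen U → U.Nonempty → APb {n : ℕ | (T ^ n) x ∈ U}),
      -- (2) there is an AP_b-hypercyclic vector
      ∃ x : X, ∀ U : Set X, IsOpen U → U.Nonempty → APb {n : ℕ | (T ^ n) x ∈ U},
      -- (3)
      (∃ x : X, Dense (Set.range fun n : ℕ => (T ^ n) x)) ∧
        (∀ U : Set X, IsOpen U → U.Nonempty → ∃ k : ℕ, 1 ≤ k ∧ ∀ m : ℕ,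
          (⋂ j ∈ Finset.Icc 1 m, (fun y : X => (T ^ (j * k)) y) ⁻¹' U).Nonempty),
      -- (4)
      (∀ U V : Set X, IsOpen U → U.Nonempty → IsOpen V → V.Nonempty →
        ∃ k : ℕ, 1 ≤ k ∧ ∀ m : ℕ, ∃ km : ℕ, ∃ x ∈ U,
          ∀ j : ℕ, j ≤ m → (T ^ (km + j * k)) x ∈ V),
      -- (5) the AP_b-hypercyclic vectors are residual
      {x : X | ∀ U : Set X, IsOpen U → U.Nonempty → APb {n : ℕ | (T ^ n) x ∈ U}}
        ∈ residual X
    ] := by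
  tfae_have 1 → 2 := by
    rintro ⟨⟨x, hx⟩, h⟩
    exact ⟨x, h x hx⟩
  tfae_have 2 → 4 := by
    rintro ⟨x, hx⟩
    exact two_to_four T hx
  tfae_have 4 → 5 := fun h4 => four_to_five T h4
  tfae_have 5 → 2 := by
    intro h5
    haveI : Nonempty X := ⟨0⟩
    obtain ⟨x, hx⟩ := (dense_of_mem_residual h5).nonempty
    exact ⟨x, hx⟩
  tfae_have 2 → 3 := by
    rintro ⟨x, hx⟩
    exact ⟨⟨x, dense_orbit_of_apb T hx⟩, fun U hU hUne => two_to_three_aux T hx hU hUne⟩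
  tfae_have 3 → 4 := fun h3 => three_to_four T h3.1 h3.2
  tfae_have 4 → 1 := by
    intro h4
    have h5 := four_to_five T h4
    haveI : Nonempty X := ⟨0⟩
    obtain ⟨x, hx⟩ := (dense_of_mem_residual h5).nonempty
    exact ⟨⟨x, dense_orbit_of_apb T hx⟩,
      fun y hy U hU hUne => apb_of_dense_orbit T h4 hy hU hUne⟩
  tfae_finish
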